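/- If A is a normal n×n complex matrix, then the block matrix [[|A|, A*], [A, |A|]] is positive semidefinite. -/

import Mathlib

open Matrix
open scoped ComplexOrder

noncomputable def Matrix.PosSemidef.sqrt {n : Type*} [Fintype n] [DecidableEq n]
    {A : Matrix n n ℂ} (hA : A.PosSemidef) : Matrix n n ℂ :=
  hA.1.eigenvectorUnitary.1 * diagonal ((↑) ∘ (Real.sqrt ∘ hA.1.eigenvalues)) *
    (star hA.1.eigenvectorUnitary : Matrix n n ℂ)

theorem Matrix.PosSemidef.posSemidef_sqrt {n : Type*} [Fintype n] [DecidableEq n]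
    {A : Matrix n n ℂ} (hA : A.PosSemidef) : PosSemidef hA.sqrt := by
  unfold Matrix.PosSemidef.sqrt
  have hD : (diagonal ((↑) ∘ (Real.sqrt ∘ hA.1.eigenvalues)) : Matrix n n ℂ).PosSemidef := by
    rw [posSemidef_diagonal_iff]
    intro i
    simp [Real.sqrt_nonneg]
  have := hD.mul_mul_conjTranspose_same (hA.1.eigenvectorUnitary.1)
  simpa [Matrix.star_eq_conjTranspose] using this

/-- The `j`-th largest singular value of a square complex matrix (`j : Fin m`, zero-indexed,
so `sv A 0` is the largest singular value). It is defined as the square root of the `j`-th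
largest eigenvalue of `Aᴴ * A`. -/
noncomputable def sv {m : ℕ} (A : Matrix (Fin m) (Fin m) ℂ) (j : Fin m) : ℝ :=
  Real.sqrt ((Matrix.isHermitian_conjTranspose_mul_self A).eigenvalues
    (Tuple.sort ((Matrix.isHermitian_conjTranspose_mul_self A).eigenvalues) j.rev))

/-- The absolute value `|A| = (Aᴴ A)^{1/2}` of a square complex matrix. -/
noncomputable def matAbs {m : ℕ} (A : Matrix (Fin m) (Fin m) ℂ) : Matrix (Fin m) (Fin m) ℂ :=
  (Matrix.posSemidef_conjTranspose_mul_self A).sqrt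

/-- The `2n × 2n` block matrix `[[A, B], [C, D]]`, reindexed by `Fin (n + n)`. -/
noncomputable def blk {n : ℕ} (A B C D : Matrix (Fin n) (Fin n) ℂ) :
    Matrix (Fin (n + n)) (Fin (n + n)) ℂ :=
  Matrix.reindex finSumFinEquiv finSumFinEquiv (Matrix.fromBlocks A B C D)

/-- `f(P)` for a Hermitian matrix `P`, via the spectral functional calculus. -/
noncomputable def herCfc {m : ℕ} {P : Matrix (Fin m) (Fin m) ℂ} (hP : P.IsHermitian)
    (f : ℝ → ℝ) : Matrix (Fin m) (Fin m) ℂ :=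
  hP.cfc f

/-- `|A| ^ r` (real power of the absolute value), via the functional calculus. -/
noncomputable def matAbsPow {m : ℕ} (A : Matrix (Fin m) (Fin m) ℂ) (r : ℝ) :
    Matrix (Fin m) (Fin m) ℂ :=
  herCfc (Matrix.posSemidef_conjTranspose_mul_self A).posSemidef_sqrt.1 (fun t => t ^ r)

/-- `f(|A|)`, via the functional calculus. -/
noncomputable def matAbsCfc {m : ℕ} (A : Matrix (Fin m) (Fin m) ℂ) (f : ℝ → ℝ) :
    Matrix (Fin m) (Fin m) ℂ :=
  herCfc (Matrix.posSemidef_conjTranspose_mul_self A).posSemidef_sqrt.1 f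

/-- The operator norm: the largest singular value. -/
noncomputable def opNorm {m : ℕ} (A : Matrix (Fin m) (Fin m) ℂ) : ℝ :=
  ⨆ j, sv A j

theorem Matrix.PosSemidef.sqrt_eq_cfc {n : Type*} [Fintype n] [DecidableEq n]
    {A : Matrix n n ℂ} (hA : A.PosSemidef) : hA.sqrt = cfc Real.sqrt A := by
  rw [hA.1.cfc_eq, Matrix.IsHermitian.cfc, Unitary.conjStarAlgAut_apply]
  rfl

open scoped MatrixOrder in
theorem Matrix.PosSemidef.sqrt_eq_CFC_sqrt {n : Type*} [Fintype n] [DecidableEq n]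
    {A : Matrix n n ℂ} (hA : A.PosSemidef) : hA.sqrt = CFC.sqrt A := by
  rw [hA.sqrt_eq_cfc, CFC.sqrt_eq_real_sqrt A hA.nonneg, cfcₙ_eq_cfc]

open scoped MatrixOrder in
theorem Matrix.PosSemidef.sqrt_mul_self {n : Type*} [Fintype n] [DecidableEq n]
    {A : Matrix n n ℂ} (hA : A.PosSemidef) : hA.sqrt * hA.sqrt = A := by
  rw [hA.sqrt_eq_CFC_sqrt]
  exact CFC.sqrt_mul_sqrt_self A hA.nonneg

open scoped MatrixOrder in
theorem Matrix.PosSemidef.eq_sqrt_of_sq_eq {n : Type*} [Fintype n] [DecidableEq n]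
    {A : Matrix n n ℂ} (hA : A.PosSemidef) {B : Matrix n n ℂ} (hB : B.PosSemidef)
    (hAB : A ^ 2 = B) : A = hB.sqrt := by
  rw [hB.sqrt_eq_CFC_sqrt]
  exact (CFC.sqrt_unique (by rw [← pow_two, hAB]) hA.nonneg).symm

-- helper 1: cfc of nonneg function at Hermitian matrix is PSD
lemma cfc_psd {m : Type*} [Fintype m] [DecidableEq m] {K : Matrix m m ℂ} (hK : K.IsHermitian)
    (f : ℝ → ℝ) (hf : ∀ t, 0 ≤ f t) : (cfc f K).PosSemidef := by
  rw [hK.cfc_eq f, Matrix.IsHermitian.cfc]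
  rw [Unitary.conjStarAlgAut_apply, star_eq_conjTranspose]
  apply Matrix.PosSemidef.mul_mul_conjTranspose_same
  apply Matrix.PosSemidef.diagonal
  intro i
  simp only [Function.comp_apply]
  rw [Pi.zero_apply]; exact Complex.zero_le_real.mpr (hf _)

-- helper 2: block diagonal PSD
lemma blockdiag_psd {m : Type*} [Fintype m] [DecidableEq m] {P Q : Matrix m m ℂ} (hP : P.PosSemidef)
    (hQ : Q.PosSemidef) : (Matrix.fromBlocks P 0 0 Q).PosSemidef := by
  rw [posSemidef_iff_dotProduct_mulVec] at hP hQ ⊢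
  constructor
  · simp [Matrix.IsHermitian, Matrix.fromBlocks_conjTranspose, hP.1.eq, hQ.1.eq]
  · intro x
    have := hP.2 (x ∘ Sum.inl)
    have := hQ.2 (x ∘ Sum.inr)
    simp only [Matrix.fromBlocks_mulVec, Matrix.zero_mulVec, add_zero, zero_add,
      dotProduct, Fintype.sum_sum_type] at *
    simpa [dotProduct] using add_nonneg ‹_› ‹_›

theorem abs_block_posSemidef_of_normal {n : ℕ} (A : Matrix (Fin n) (Fin n) ℂ)
    (hN : Aᴴ * A = A * Aᴴ) :
    (blk (matAbs A) Aᴴ A (matAbs A)).PosSemidef := by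
  set R : Matrix (Fin n) (Fin n) ℂ := matAbs A with hR
  set K : Matrix (Fin (n) ⊕ Fin (n)) (Fin n ⊕ Fin n) ℂ := Matrix.fromBlocks 0 Aᴴ A 0 with hKdef
  set D : Matrix (Fin (n) ⊕ Fin (n)) (Fin n ⊕ Fin n) ℂ := Matrix.fromBlocks R 0 0 R with hDdef
  have hRsd : R.PosSemidef := (Matrix.posSemidef_conjTranspose_mul_self A).posSemidef_sqrt
  have hRR : R * R = Aᴴ * A := (Matrix.posSemidef_conjTranspose_mul_self A).sqrt_mul_self
  have hK : K.IsHermitian := by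
    simp [hKdef, Matrix.IsHermitian, Matrix.fromBlocks_conjTranspose]
  have hD : D.PosSemidef := blockdiag_psd hRsd hRsd
  have hKK : K * K = Matrix.fromBlocks (Aᴴ * A) 0 0 (Aᴴ * A) := by
    simp [hKdef, Matrix.fromBlocks_multiply, hN]
  have hDD : D * D = K * K := by
    simp [hDdef, hKK, Matrix.fromBlocks_multiply, hRR]
  have hK2 : (K * K).PosSemidef := by
    have := Matrix.posSemidef_conjTranspose_mul_self K
    rwa [hK.eq] at this
  -- B = cfc |·| K
  have hBsd : (cfc (fun t : ℝ => |t|) K).PosSemidef := cfc_psd hK (fun t : ℝ => |t|) (fun t => abs_nonneg t)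
  have hKsa : IsSelfAdjoint K := hK
  have hBB : cfc (fun t : ℝ => |t|) K * cfc (fun t : ℝ => |t|) K = K * K := by
    rw [← cfc_mul (fun t : ℝ => |t|) (fun t : ℝ => |t|) K]
    have : (fun t : ℝ => |t| * |t|) = fun t : ℝ => t * t := by
      ext t; exact abs_mul_abs_self t
    rw [this]
    rw [show (fun t : ℝ => t * t) = (fun t : ℝ => (id t : ℝ) * id t) from rfl]
    rw [cfc_mul (id : ℝ → ℝ) (id : ℝ → ℝ) K, cfc_id ℝ K]
  have hDB : D = cfc (fun t : ℝ => |t|) K := by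
    rw [hD.eq_sqrt_of_sq_eq hK2 (by rw [pow_two, hDD]),
        hBsd.eq_sqrt_of_sq_eq hK2 (by rw [pow_two, hBB])]
  -- the block matrix equals D + K = cfc (|t| + t) K
  have hM : Matrix.fromBlocks R Aᴴ A R = cfc (fun t : ℝ => |t| + t) K := by
    rw [cfc_add K (fun t : ℝ => |t|) (fun t : ℝ => t), ← hDB]
    have : cfc (fun t : ℝ => t) K = K := cfc_id ℝ K
    rw [this, hDdef, hKdef, Matrix.fromBlocks_add]
    simp
  have hMsd : (Matrix.fromBlocks R Aᴴ A R).PosSemidef := by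
    rw [hM]
    exact cfc_psd hK (fun t : ℝ => |t| + t) (fun t => show (0:ℝ) ≤ |t| + t by linarith [neg_abs_le t])
  have : blk R Aᴴ A R = (Matrix.fromBlocks R Aᴴ A R).submatrix finSumFinEquiv.symm
      finSumFinEquiv.symm := by
    rw [blk, Matrix.reindex_apply]
  rw [this]
  exact hMsd.submatrix _
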